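/- If C ⊆ Σ_q^n is a (t−s−1,b)-burst-correcting code with 0 ≤ s ≤ t−1 and q, t, b fixed, then for any two distinct codewords x, y ∈ C, the intersection of their radius-t burst balls satisfies |Ball_{t,b}(x) ∩ Ball_{t,b}(y)| = O(n^s); hence the reconstruction degree of C over the t-burst channel is O(n^s). -/

import Mathlib

open scoped BigOperators

/-- The cyclic interval of length `L` starting at position `i` in `ZMod n`. -/
def cycInt (n : ℕ) (i : ZMod n) (L : ℕ) : Set (ZMod n) :=
  {j | ∃ k : ℕ, k < L ∧ j = i + (k : ZMod n)}

/-- `e` is a burst supported in the cyclic interval starting at `i` of length `L ≤ b`. -/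
def BurstAt {G : Type*} [AddCommGroup G] {n : ℕ} (b : ℕ) (e : ZMod n → G)
    (i : ZMod n) (L : ℕ) : Prop :=
  L ≤ b ∧ ∀ j : ZMod n, e j ≠ 0 → j ∈ cycInt n i L

/-- `e` is a `b≤`-burst: its support lies in a cyclic interval of length at most `b`. -/
def IsBurst {G : Type*} [AddCommGroup G] {n : ℕ} (b : ℕ) (e : ZMod n → G) : Prop :=
  ∃ i L, BurstAt b e i L

/-- `w` is a sum of exactly `t` many `b≤`-bursts. -/
def SumOfBursts {G : Type*} [AddCommGroup G] {n : ℕ} (b t : ℕ) (w : ZMod n → G) : Prop :=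
  ∃ l : List (ZMod n → G), l.length = t ∧ (∀ e ∈ l, IsBurst b e) ∧ l.sum = w

/-- The cyclic burst distance: minimum number of `b≤`-bursts summing to `x - y`. -/
noncomputable def burstDist {G : Type*} [AddCommGroup G] {n : ℕ} (b : ℕ)
    (x y : ZMod n → G) : ℕ :=
  sInf {t | SumOfBursts b t (x - y)}

/-- `w` is a sum of exactly `t` pairwise disjoint `b≤`-bursts (disjoint covering intervals). -/
def SumOfDisjointBursts {G : Type*} [AddCommGroup G] {n : ℕ} (b t : ℕ)
    (w : ZMod n → G) : Prop :=
  ∃ (es : Fin t → ZMod n → G) (ps : Fin t → ZMod n) (Ls : Fin t → ℕ),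
    (∀ m, BurstAt b (es m) (ps m) (Ls m)) ∧
    (∀ m m' : Fin t, m ≠ m' → cycInt n (ps m) (Ls m) ∩ cycInt n (ps m') (Ls m') = ∅) ∧
    ∑ m, es m = w

/-- `B_{≤t,≤b}`: vectors expressible as a sum of at most `t` pairwise disjoint `b≤`-bursts. -/
def BSet (n b t : ℕ) (G : Type*) [AddCommGroup G] : Set (ZMod n → G) :=
  {w | ∃ i ≤ t, SumOfDisjointBursts b i w}

/-- The radius-`t` burst ball around `x`. -/
def burstBall {G : Type*} [AddCommGroup G] {n : ℕ} (b t : ℕ) (x : ZMod n → G) :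
    Set (ZMod n → G) :=
  {y | burstDist b x y ≤ t}

/-- A `(t,b)`-burst-correcting code: radius-`t` burst balls around distinct codewords
are disjoint. -/
def IsBurstCorrecting {G : Type*} [AddCommGroup G] {n : ℕ} (t b : ℕ)
    (C : Set (ZMod n → G)) : Prop :=
  ∀ u ∈ C, ∀ v ∈ C, u ≠ v → burstBall b t u ∩ burstBall b t v = ∅


section Aux

variable {G : Type*} [AddCommGroup G] {n b : ℕ}

lemma cycInt_mono (i : ZMod n) {L L' : ℕ} (h : L ≤ L') : cycInt n i L ⊆ cycInt n i L' := by
  rintro j ⟨k, hk, rfl⟩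
  exact ⟨k, lt_of_lt_of_le hk h, rfl⟩

lemma cycInt_ncard_le [NeZero n] (i : ZMod n) (L : ℕ) : (cycInt n i L).ncard ≤ L := by
  have h : cycInt n i L = (fun k : Fin L => i + ((k : ℕ) : ZMod n)) '' Set.univ := by
    ext j
    constructor
    · rintro ⟨k, hk, rfl⟩; exact ⟨⟨k, hk⟩, trivial, rfl⟩
    · rintro ⟨k, -, rfl⟩; exact ⟨(k : ℕ), k.2, rfl⟩
  rw [h]
  calc ((fun k : Fin L => i + ((k : ℕ) : ZMod n)) '' Set.univ).ncard
      ≤ (Set.univ : Set (Fin L)).ncard := Set.ncard_image_le (Set.toFinite _)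
    _ = L := by rw [Set.ncard_univ]; simp

def listCover (n : ℕ) (Q : List (ZMod n)) (len : ℕ) : Set (ZMod n) :=
  {j | ∃ q ∈ Q, j ∈ cycInt n q len}

lemma listCover_ncard_le [NeZero n] (Q : List (ZMod n)) (len : ℕ) :
    (listCover n Q len).ncard ≤ Q.length * len := by
  induction Q with
  | nil => simp [listCover]
  | cons q Q ih =>
    have h : listCover n (q :: Q) len = cycInt n q len ∪ listCover n Q len := by
      ext j
      simp only [listCover, Set.mem_setOf_eq, List.mem_cons, Set.mem_union]
      constructor
      · rintro ⟨q', (rfl | hq'), hj⟩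
        · exact Or.inl hj
        · exact Or.inr ⟨q', hq', hj⟩
      · rintro (hj | ⟨q', hq', hj⟩)
        · exact ⟨q, Or.inl rfl, hj⟩
        · exact ⟨q', Or.inr hq', hj⟩
    rw [h]
    calc (cycInt n q len ∪ listCover n Q len).ncard
        ≤ (cycInt n q len).ncard + (listCover n Q len).ncard := Set.ncard_union_le _ _
      _ ≤ len + Q.length * len := add_le_add (cycInt_ncard_le _ _) ih
      _ = (q :: Q).length * len := by simp [List.length_cons]; ring

lemma list_sum_apply (l : List (ZMod n → G)) (j : ZMod n) :
    l.sum j = (l.map (fun e => e j)).sum := by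
  induction l with
  | nil => rfl
  | cons e l ih => simp [List.sum_cons, ih]

lemma list_sum_eq_zero {j : ZMod n} :
    ∀ l : List (ZMod n → G), (∀ e ∈ l, e j = 0) → l.sum j = 0 := by
  intro l
  induction l with
  | nil => intro _; rfl
  | cons e l ih =>
    intro h
    have h1 : e j = 0 := h e (List.mem_cons_self)
    have h2 : l.sum j = 0 := ih (fun e' he' => h e' (List.mem_cons_of_mem _ he'))
    simp [List.sum_cons, h1, h2]

lemma exists_mem_ne_zero_of_sum_ne_zero {l : List (ZMod n → G)} {j : ZMod n}
    (h : l.sum j ≠ 0) : ∃ e ∈ l, e j ≠ 0 := by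
  by_contra hc
  push_neg at hc
  exact h (list_sum_eq_zero l hc)

lemma sumOfBursts_exists [NeZero n] (hb : 1 ≤ b) (w : ZMod n → G) : SumOfBursts b n w := by
  classical
  refine ⟨(Finset.univ : Finset (ZMod n)).toList.map
    (fun i => fun j => if j = i then w j else 0), ?_, ?_, ?_⟩
  · simp [ZMod.card]
  · rintro e he
    simp only [List.mem_map] at he
    obtain ⟨i, -, rfl⟩ := he
    refine ⟨i, 1, hb, fun j hj => ?_⟩
    by_cases h : j = i
    · exact ⟨0, zero_lt_one, by simp [h]⟩
    · simp [h] at hj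
  · funext j
    rw [list_sum_apply, List.map_map]
    have : ((fun e : ZMod n → G => e j) ∘ fun i => fun j' => if j' = i then w j' else 0)
        = fun i => if j = i then w j else 0 := rfl
    rw [this, Finset.sum_map_toList]
    simp

lemma neg_isBurst {e : ZMod n → G} (he : IsBurst b e) : IsBurst b (-e) := by
  obtain ⟨i, L, hL, hsupp⟩ := he
  exact ⟨i, L, hL, fun j hj => hsupp j (by simpa using hj)⟩

lemma list_sum_neg (l : List (ZMod n → G)) : (l.map (fun e => -e)).sum = -l.sum := by
  induction l with
  | nil => simp
  | cons e l ih => simp [List.sum_cons, ih]; abel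

def Kset (b : ℕ) (w : ZMod n → G) : Set (ZMod n) :=
  {j | ∃ j', w j' ≠ 0 ∧ j ∈ cycInt n (j' - ((b - 1 : ℕ) : ZMod n)) (2 * b - 1)}

lemma supp_subset_Kset (hb : 1 ≤ b) (w : ZMod n → G) {j : ZMod n} (h : w j ≠ 0) :
    j ∈ Kset b w :=
  ⟨j, h, ⟨b - 1, by omega, by abel⟩⟩

lemma far_burst_disjoint (w : ZMod n → G) {e : ZMod n → G}
    (he : IsBurst b e) (hfar : ∃ j0, e j0 ≠ 0 ∧ j0 ∉ Kset b w) :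
    ∀ j, e j ≠ 0 → w j = 0 := by
  obtain ⟨i, L, hLb, hsupp⟩ := he
  obtain ⟨j0, hj0, hj0K⟩ := hfar
  intro j hj
  by_contra hwj
  apply hj0K
  obtain ⟨a0, ha0, h0eq⟩ := hsupp j0 hj0
  obtain ⟨a, ha, hjeq⟩ := hsupp j hj
  refine ⟨j, hwj, ⟨a0 + (b - 1) - a, by omega, ?_⟩⟩
  have hle : a ≤ a0 + (b - 1) := by omega
  rw [h0eq, hjeq, Nat.cast_sub hle]
  push_cast
  ring

lemma decompose_lemma (w : ZMod n → G) (K : Set (ZMod n))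
    (hfar : ∀ e : ZMod n → G, IsBurst b e → (∃ j0, e j0 ≠ 0 ∧ j0 ∉ K) →
      ∀ j, e j ≠ 0 → w j = 0) :
    ∀ l : List (ZMod n → G), (∀ e ∈ l, IsBurst b e) →
    ∃ (l' : List (ZMod n → G)) (P : List (ZMod n)),
      (∀ e ∈ l', IsBurst b e) ∧
      (∀ j, w j = 0 → l'.sum j = 0) ∧
      (∀ j, w j ≠ 0 → l'.sum j = l.sum j) ∧
      l'.length + P.length ≤ l.length ∧
      ∀ j ∉ K, ∀ e ∈ l, e j ≠ 0 → ∃ q ∈ P, j ∈ cycInt n q b := by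
  classical
  intro l
  induction l with
  | nil =>
    intro _
    exact ⟨[], [], by simp, by intro j _; rfl, by intro j _; rfl, by simp, by simp⟩
  | cons e l ih =>
    intro hl
    obtain ⟨l', P, h1, h2, h2', h3, h4⟩ := ih (fun e' he' => hl e' (List.mem_cons_of_mem _ he'))
    have heb : IsBurst b e := hl e (List.mem_cons_self)
    obtain ⟨i, L, hLb, hsupp⟩ := heb
    by_cases hFar : ∃ j0, e j0 ≠ 0 ∧ j0 ∉ K
    · -- far burst: drop it, record its start
      have hez : ∀ j, w j ≠ 0 → e j = 0 := by
        intro j hwj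
        by_contra hej
        exact hwj (hfar e ⟨i, L, hLb, hsupp⟩ hFar j hej)
      refine ⟨l', i :: P, h1, h2, ?_, ?_, ?_⟩
      · intro j hwj
        rw [h2' j hwj, List.sum_cons, Pi.add_apply, hez j hwj, zero_add]
      · simp only [List.length_cons]
        omega
      · intro j hjK e' he' hej
        rcases List.mem_cons.mp he' with rfl | he'
        · obtain ⟨a, haL, haeq⟩ := hsupp j hej
          exact ⟨i, List.mem_cons_self, ⟨a, lt_of_lt_of_le haL hLb, haeq⟩⟩
        · obtain ⟨q, hq, hjq⟩ := h4 j hjK e' he' hej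
          exact ⟨q, List.mem_cons_of_mem _ hq, hjq⟩
    · -- near burst: keep its restriction
      push_neg at hFar
      refine ⟨(fun j => if w j = 0 then (0 : G) else e j) :: l', P, ?_, ?_, ?_, ?_, ?_⟩
      · rintro e' he'
        rcases List.mem_cons.mp he' with rfl | he'
        · refine ⟨i, L, hLb, fun j hj => ?_⟩
          apply hsupp
          intro hej
          simp [hej] at hj
        · exact h1 e' he'
      · intro j hwj
        simp [List.sum_cons, Pi.add_apply, hwj, h2 j hwj]
      · intro j hwj
        simp only [List.sum_cons, Pi.add_apply, if_neg hwj]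
        rw [h2' j hwj]
      · simp only [List.length_cons]
        omega
      · intro j hjK e' he' hej
        rcases List.mem_cons.mp he' with rfl | he'
        · exact absurd (hFar j hej) hjK
        · exact h4 j hjK e' he' hej

lemma cover_of_bursts :
    ∀ l : List (ZMod n → G), (∀ e ∈ l, IsBurst b e) →
    ∃ Q : List (ZMod n), Q.length = l.length ∧
      ∀ j : ZMod n, ∀ e ∈ l, e j ≠ 0 → ∃ q ∈ Q, j ∈ cycInt n q b := by
  intro l
  induction l with
  | nil => exact fun _ => ⟨[], rfl, by simp⟩
  | cons e l ih =>
    intro hl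
    obtain ⟨Q, hQ, hcov⟩ := ih (fun e' he' => hl e' (List.mem_cons_of_mem _ he'))
    obtain ⟨i, L, hLb, hsupp⟩ := hl e (List.mem_cons_self)
    refine ⟨i :: Q, by simp [hQ], ?_⟩
    intro j e' he' hej
    rcases List.mem_cons.mp he' with rfl | he'
    · obtain ⟨a, haL, haeq⟩ := hsupp j hej
      exact ⟨i, List.mem_cons_self, ⟨a, lt_of_lt_of_le haL hLb, haeq⟩⟩
    · obtain ⟨q, hq, hjq⟩ := hcov j e' he' hej
      exact ⟨q, List.mem_cons_of_mem _ hq, hjq⟩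

lemma ncard_biUnion_le {α ι : Type*} (F : Finset ι) (f : ι → Set α) :
    (⋃ i ∈ F, f i).ncard ≤ ∑ i ∈ F, (f i).ncard := by
  classical
  induction F using Finset.induction with
  | empty => simp
  | insert _ _ hx ih =>
    rw [Finset.set_biUnion_insert, Finset.sum_insert hx]
    exact le_trans (Set.ncard_union_le _ _) (add_le_add le_rfl ih)


lemma ncard_ball_le {G : Type*} [AddCommGroup G] [Fintype G] {n : ℕ} [NeZero n]
    (a : ZMod n → G) (D : Set (ZMod n)) :
    {z : ZMod n → G | ∀ j, (a - z) j ≠ 0 → j ∈ D}.ncard ≤ Fintype.card G ^ D.ncard := by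
  classical
  haveI : Fintype ↥D := Fintype.ofFinite _
  have hinj : Set.InjOn (fun z : ZMod n → G => (fun j : ↥D => (a - z) (j : ZMod n)))
      {z : ZMod n → G | ∀ j, (a - z) j ≠ 0 → j ∈ D} := by
    intro z1 h1 z2 h2 heq
    funext j
    by_cases hj : j ∈ D
    · have h3 := congrFun heq ⟨j, hj⟩
      simp only [Pi.sub_apply] at h3
      have h4 : z1 j = a j - (a j - z1 j) := by abel
      rw [h4, h3]
      abel
    · have e1 : (a - z1) j = 0 := by
        by_contra h
        exact hj (h1 j h)
      have e2 : (a - z2) j = 0 := by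
        by_contra h
        exact hj (h2 j h)
      simp only [Pi.sub_apply, sub_eq_zero] at e1 e2
      rw [← e1, ← e2]
  have hle := Set.ncard_le_ncard_of_injOn _ (fun z _ => Set.mem_univ
    ((fun z : ZMod n → G => (fun j : ↥D => (a - z) (j : ZMod n))) z)) hinj (Set.toFinite _)
  calc {z : ZMod n → G | ∀ j, (a - z) j ≠ 0 → j ∈ D}.ncard
      ≤ (Set.univ : Set (↥D → G)).ncard := hle
    _ = Fintype.card (↥D → G) := by rw [Set.ncard_univ, Nat.card_eq_fintype_card]
    _ = Fintype.card G ^ Fintype.card ↥D := Fintype.card_fun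
    _ = Fintype.card G ^ D.ncard := by rw [← Nat.card_coe_set_eq, Nat.card_eq_fintype_card]

end Aux


/-- if C is a (t−s−1,b)-burst-correcting code (minimum burst distance at
least 2(t−s−1)+1), then pairwise intersections of radius-t burst balls have size O(n^s);
hence the reconstruction degree of C over the t-burst channel is O(n^s). -/
theorem reconstruction_degree_of_correcting_code {G : Type*} [AddCommGroup G] [Fintype G]
    (q t b s : ℕ) (hq : Fintype.card G = q) (hq2 : 2 ≤ q) (hb : 1 ≤ b)
    (hs : s + 1 ≤ t) :
    ∃ c : ℝ, 0 < c ∧ ∀ n : ℕ, 2 * b * t ≤ n → ∀ C : Set (ZMod n → G),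
      (∀ u ∈ C, ∀ v ∈ C, u ≠ v → 2 * (t - s - 1) + 1 ≤ burstDist b u v) →
      ∀ x ∈ C, ∀ y ∈ C, x ≠ y →
        ((burstBall b t x ∩ burstBall b t y).ncard : ℝ) + 1 ≤ c * (n : ℝ) ^ s := by
  classical
  set M : ℕ := 2 * t * (3 * b - 2) + s * b with hM
  refine ⟨2 * (q : ℝ) ^ M + 1, by positivity, ?_⟩
  intro n hn C hC x hx y hy hxy
  have ht1 : 1 ≤ t := le_trans (Nat.le_add_left 1 s) hs
  have h2n : 2 ≤ n := by
    refine le_trans ?_ hn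
    calc 2 = 2 * 1 * 1 := by ring
      _ ≤ 2 * b * t := Nat.mul_le_mul (Nat.mul_le_mul le_rfl hb) ht1
  haveI : NeZero n := ⟨by omega⟩
  set w : ZMod n → G := x - y with hw
  set I : Set (ZMod n → G) := burstBall b t x ∩ burstBall b t y with hI
  have hns1 : (1 : ℝ) ≤ (n : ℝ) ^ s := by
    have h1 : (1 : ℝ) ≤ (n : ℝ) := by exact_mod_cast (by omega : 1 ≤ n)
    exact one_le_pow₀ h1
  have hqpos : (0 : ℝ) ≤ (q : ℝ) ^ M := by positivity
  suffices hkey : I.ncard ≤ 2 * q ^ M * n ^ s by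
    have hkey' : (I.ncard : ℝ) ≤ 2 * (q : ℝ) ^ M * (n : ℝ) ^ s := by exact_mod_cast hkey
    nlinarith [hns1, hkey']
  rcases Set.eq_empty_or_nonempty I with hIe | ⟨z0, hz0⟩
  · simp [hIe]
  -- auxiliary: extract decompositions
  have hdecomp : ∀ a z : ZMod n → G, burstDist b a z ≤ t →
      ∃ l : List (ZMod n → G), l.length ≤ t ∧ (∀ e ∈ l, IsBurst b e) ∧ l.sum = a - z := by
    intro a z hzt
    have hne : {m | SumOfBursts b m (a - z)}.Nonempty := ⟨n, sumOfBursts_exists hb _⟩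
    obtain ⟨l, hlen, hbl, hsum⟩ := Nat.sInf_mem hne
    refine ⟨l, ?_, hbl, hsum⟩
    rw [hlen]
    exact hzt
  -- decomposition of w coming from the point z0 in the intersection
  obtain ⟨l01, hl01len, hl01b, hl01sum⟩ := hdecomp x z0 hz0.1
  obtain ⟨l02, hl02len, hl02b, hl02sum⟩ := hdecomp y z0 hz0.2
  set l0 : List (ZMod n → G) := l01 ++ l02.map (fun e => -e) with hl0
  have hl0b : ∀ e ∈ l0, IsBurst b e := by
    intro e he
    rcases List.mem_append.mp he with he | he
    · exact hl01b e he
    · obtain ⟨e', he', rfl⟩ := List.mem_map.mp he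
      exact neg_isBurst (hl02b e' he')
  have hl0sum : l0.sum = w := by
    rw [hl0, List.sum_append, list_sum_neg, hl01sum, hl02sum, hw]
    abel
  have hl0len : l0.length ≤ 2 * t := by
    simp only [hl0, List.length_append, List.length_map]
    omega
  obtain ⟨Q, hQlen, hQcov⟩ := cover_of_bursts l0 hl0b
  set Q' : List (ZMod n) := Q.map (fun qq => qq - ((b - 1 : ℕ) : ZMod n)) with hQ'
  set K : Set (ZMod n) := listCover n Q' (3 * b - 2) with hK
  have hKcard : K.ncard ≤ 2 * t * (3 * b - 2) := by
    refine le_trans (listCover_ncard_le _ _) (Nat.mul_le_mul_right _ ?_)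
    simp only [hQ', List.length_map]
    omega
  have hKsub : Kset b w ⊆ K := by
    rintro j ⟨j', hwj', k, hk, rfl⟩
    obtain ⟨e, he, hej'⟩ : ∃ e ∈ l0, e j' ≠ 0 :=
      exists_mem_ne_zero_of_sum_ne_zero (l := l0) (j := j') (by rw [hl0sum]; exact hwj')
    obtain ⟨qq, hq', a, haB, haeq⟩ := hQcov j' e he hej'
    refine ⟨qq - ((b - 1 : ℕ) : ZMod n), List.mem_map.mpr ⟨qq, hq', rfl⟩, a + k, by omega, ?_⟩
    rw [haeq]
    push_cast
    ring
  have hSK : ∀ j, w j ≠ 0 → j ∈ K := fun j h => hKsub (supp_subset_Kset hb w h)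
  have hfarK : ∀ e : ZMod n → G, IsBurst b e → (∃ j0, e j0 ≠ 0 ∧ j0 ∉ K) →
      ∀ j, e j ≠ 0 → w j = 0 := by
    rintro e heb ⟨j0, h0, h0K⟩ j hej
    exact far_burst_disjoint w heb ⟨j0, h0, fun hmem => h0K (hKsub hmem)⟩ j hej
  have hdxy : 2 * (t - s - 1) + 1 ≤ burstDist b x y := hC x hx y hy hxy
  set Dp : (Fin s → ZMod n) → Set (ZMod n) :=
    fun p => K ∪ listCover n (List.ofFn p) b with hDp
  -- the covering step
  have hcover : I ⊆ ⋃ p ∈ (Finset.univ : Finset (Fin s → ZMod n)),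
      ({z : ZMod n → G | ∀ j, (x - z) j ≠ 0 → j ∈ Dp p} ∪
        {z : ZMod n → G | ∀ j, (y - z) j ≠ 0 → j ∈ Dp p}) := by
    intro z hz
    obtain ⟨l1, hl1len, hl1b, hl1sum⟩ := hdecomp x z hz.1
    obtain ⟨l2a, hl2alen, hl2ab, hl2asum⟩ := hdecomp y z hz.2
    set l2 : List (ZMod n → G) := l2a.map (fun e => -e) with hl2
    have hl2b : ∀ e ∈ l2, IsBurst b e := by
      intro e he
      obtain ⟨e', he', rfl⟩ := List.mem_map.mp he
      exact neg_isBurst (hl2ab e' he')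
    have hl2sum : l2.sum = z - y := by
      rw [hl2, list_sum_neg, hl2asum]
      abel
    have hl2len : l2.length ≤ t := by
      simpa [hl2] using hl2alen
    obtain ⟨m1, P1, hm1b, h1z, h1nz, h1len, h1cov⟩ := decompose_lemma w K hfarK l1 hl1b
    obtain ⟨m2, P2, hm2b, h2z, h2nz, h2len, h2cov⟩ := decompose_lemma w K hfarK l2 hl2b
    have hsum12 : (m1 ++ m2).sum = x - y := by
      funext j
      rw [List.sum_append, Pi.add_apply]
      by_cases hwj : w j = 0
      · rw [h1z j hwj, h2z j hwj, add_zero]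
        rw [hw] at hwj
        exact hwj.symm
      · rw [h1nz j hwj, h2nz j hwj, hl1sum, hl2sum]
        simp only [Pi.sub_apply]
        abel
    have hdle : burstDist b x y ≤ m1.length + m2.length := by
      refine Nat.sInf_le ⟨m1 ++ m2, List.length_append, ?_, hsum12⟩
      intro e he
      rcases List.mem_append.mp he with he | he
      · exact hm1b e he
      · exact hm2b e he
    have hP : P1.length ≤ s ∨ P2.length ≤ s := by omega
    have hcov_side : ∀ (a : ZMod n → G) (l : List (ZMod n → G)) (P : List (ZMod n)),
        l.sum = a → P.length ≤ s →
        (∀ j ∉ K, ∀ e ∈ l, e j ≠ 0 → ∃ qq ∈ P, j ∈ cycInt n qq b) →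
        ∃ p : Fin s → ZMod n, ∀ j, a j ≠ 0 → j ∈ Dp p := by
      intro a l P hsum hPs hPcov
      refine ⟨fun i => P.getD i 0, ?_⟩
      intro j hj
      by_cases hjK : j ∈ K
      · exact Or.inl hjK
      · obtain ⟨e, he, hej⟩ : ∃ e ∈ l, e j ≠ 0 :=
          exists_mem_ne_zero_of_sum_ne_zero (by rw [hsum]; exact hj)
        obtain ⟨qq, hqP, hjq⟩ := hPcov j hjK e he hej
        obtain ⟨k, hk, hkeq⟩ := List.getElem_of_mem hqP
        refine Or.inr ⟨qq, ?_, hjq⟩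
        refine List.mem_ofFn.mpr ⟨⟨k, lt_of_lt_of_le hk hPs⟩, ?_⟩
        show P.getD k 0 = qq
        rw [List.getD_eq_getElem _ _ hk]
        exact hkeq
    rcases hP with hP1 | hP2
    · obtain ⟨p, hp⟩ := hcov_side (x - z) l1 P1 hl1sum hP1 h1cov
      exact Set.mem_biUnion (Finset.mem_univ p) (Or.inl hp)
    · obtain ⟨p, hp⟩ := hcov_side (z - y) l2 P2 hl2sum hP2 h2cov
      refine Set.mem_biUnion (Finset.mem_univ p) (Or.inr ?_)
      intro j hj
      apply hp j
      intro h0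
      apply hj
      show (y - z) j = 0
      have hyz : (y - z) j = -((z - y) j) := by
        simp only [Pi.sub_apply]
        abel
      rw [hyz, h0, neg_zero]
  -- the counting step
  have hcard_one : ∀ (a : ZMod n → G) (p : Fin s → ZMod n),
      {z : ZMod n → G | ∀ j, (a - z) j ≠ 0 → j ∈ Dp p}.ncard ≤ q ^ M := by
    intro a p
    have hD : (Dp p).ncard ≤ M := by
      have hDeq : Dp p = K ∪ listCover n (List.ofFn p) b := by rw [hDp]
      rw [hDeq]
      refine le_trans (Set.ncard_union_le _ _) ?_
      have h2 : (listCover n (List.ofFn p) b).ncard ≤ s * b := by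
        simpa [List.length_ofFn] using listCover_ncard_le (List.ofFn p) b
      omega
    calc {z : ZMod n → G | ∀ j, (a - z) j ≠ 0 → j ∈ Dp p}.ncard
        ≤ Fintype.card G ^ (Dp p).ncard := ncard_ball_le a (Dp p)
      _ = q ^ (Dp p).ncard := by rw [hq]
      _ ≤ q ^ M := Nat.pow_le_pow_right (by omega) hD
  calc I.ncard ≤ (⋃ p ∈ (Finset.univ : Finset (Fin s → ZMod n)),
        ({z : ZMod n → G | ∀ j, (x - z) j ≠ 0 → j ∈ Dp p} ∪
          {z : ZMod n → G | ∀ j, (y - z) j ≠ 0 → j ∈ Dp p})).ncard :=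
      Set.ncard_le_ncard hcover (Set.toFinite _)
    _ ≤ ∑ p ∈ (Finset.univ : Finset (Fin s → ZMod n)),
        ({z : ZMod n → G | ∀ j, (x - z) j ≠ 0 → j ∈ Dp p} ∪
          {z : ZMod n → G | ∀ j, (y - z) j ≠ 0 → j ∈ Dp p}).ncard := ncard_biUnion_le _ _
    _ ≤ ∑ _p ∈ (Finset.univ : Finset (Fin s → ZMod n)), 2 * q ^ M := by
      refine Finset.sum_le_sum ?_
      intro p _
      refine le_trans (Set.ncard_union_le _ _) ?_
      have hx1 := hcard_one x p
      have hy1 := hcard_one y p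
      omega
    _ = n ^ s * (2 * q ^ M) := by
      rw [Finset.sum_const, Finset.card_univ]
      simp [Fintype.card_fun, ZMod.card]
    _ = 2 * q ^ M * n ^ s := by ring
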